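/- Let t be even and let C ⊆ {0,1}^n be an orthogonal array OA(N,n,2,t) with N = 2^n (1 - (n+1)/(2(t+2))). Let C' = C + 1̄ (coordinatewise complement of C) and C'' = {0,1}^n \ (C ∪ C'). Then C and C' are disjoint and (C, C', C'') is an equitable 3-partition of Q_n with quotient matrix [[0, a, n-a],[a, 0, n-a],[a+1, a+1, n-2a-2]], where a = 2t - n + 2. -/

import Mathlib

namespace OA6
def eps : Fin 2 → ℤ
  | 0 => 1
  | 1 => -1

variable {n : ℕ}

def chi (S : Finset (Fin n)) (x : Fin n → Fin 2) : ℤ := ∏ i ∈ S, eps (x i)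

lemma eps_add (a b : Fin 2) : eps (a + b) = eps a * eps b := by revert a b; decide

lemma eps_add_one (a : Fin 2) : eps (a + 1) = - eps a := by revert a; decide

lemma chi_mul (S : Finset (Fin n)) (x y : Fin n → Fin 2) :
    chi S x * chi S y = chi S (x + y) := by
  unfold chi
  rw [← Finset.prod_mul_distrib]
  exact Finset.prod_congr rfl fun i _ => (eps_add (x i) (y i)).symm

lemma sum_chi (z : Fin n → Fin 2) :
    ∑ S : Finset (Fin n), chi S z = if z = 0 then 2 ^ n else 0 := by
  have h : ∑ S : Finset (Fin n), chi S z = ∏ i : Fin n, (eps (z i) + 1) := by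
    rw [Finset.prod_add]
    rw [← Finset.powerset_univ]
    exact (Finset.sum_congr rfl fun S _ => by simp [chi]).symm
  rw [h]
  by_cases hz : z = 0
  · subst hz; simp [eps]
  · have : ∃ i, z i ≠ 0 := by
      by_contra hc
      push_neg at hc
      exact hz (funext hc)
    obtain ⟨i, hi⟩ := this
    have : z i = 1 := by omega
    rw [if_neg hz]
    exact Finset.prod_eq_zero (Finset.mem_univ i) (by rw [this]; rfl)

lemma add_eq_zero_iff (x y : Fin n → Fin 2) : x + y = 0 ↔ x = y := by
  constructor
  · intro h
    funext i
    have h2 : x i + y i = 0 := congrFun h i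
    have : ∀ a b : Fin 2, a + b = 0 → a = b := by decide
    exact this _ _ h2
  · rintro rfl
    funext i
    have : ∀ a : Fin 2, a + a = 0 := by decide
    exact this (x i)

lemma parseval (X Y : (Fin n → Fin 2) → ℤ) :
    ∑ S : Finset (Fin n), (∑ v, X v * chi S v) * (∑ v, Y v * chi S v)
      = 2 ^ n * ∑ v, X v * Y v := by
  have key : ∀ S : Finset (Fin n), (∑ v, X v * chi S v) * (∑ v, Y v * chi S v)
      = ∑ v, ∑ w, X v * Y w * (chi S v * chi S w) := by
    intro S
    rw [Finset.sum_mul_sum]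
    apply Finset.sum_congr rfl; intro v _
    apply Finset.sum_congr rfl; intro w _
    ring
  simp_rw [key]
  rw [Finset.sum_comm]
  have : ∀ v : Fin n → Fin 2,
      ∑ S : Finset (Fin n), ∑ w, X v * Y w * (chi S v * chi S w)
        = 2 ^ n * (X v * Y v) := by
    intro v
    rw [Finset.sum_comm]
    have inner : ∀ w : Fin n → Fin 2,
        ∑ S : Finset (Fin n), X v * Y w * (chi S v * chi S w)
          = X v * Y w * (if v + w = 0 then 2 ^ n else 0) := by
      intro w
      rw [← Finset.mul_sum]
      congr 1
      calc ∑ S : Finset (Fin n), chi S v * chi S w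
          = ∑ S : Finset (Fin n), chi S (v + w) := by
            exact Finset.sum_congr rfl fun S _ => chi_mul S v w
        _ = _ := sum_chi (v + w)
    simp_rw [inner]
    have h2 : ∀ w : Fin n → Fin 2,
        X v * Y w * (if v + w = 0 then (2:ℤ) ^ n else 0)
          = if w = v then 2 ^ n * (X v * Y v) else 0 := by
      intro w
      by_cases h : w = v
      · subst h
        rw [if_pos ((add_eq_zero_iff w w).mpr rfl), if_pos rfl]
        ring
      · rw [if_neg (fun hc => h (((add_eq_zero_iff v w).mp hc).symm)), if_neg h]
        ring
    simp_rw [h2]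
    simp
  simp_rw [this]
  rw [← Finset.mul_sum]


lemma inversion (X : (Fin n → Fin 2) → ℤ) (x : Fin n → Fin 2) :
    ∑ S : Finset (Fin n), (∑ v, X v * chi S v) * chi S x = 2 ^ n * X x := by
  have key : ∀ S : Finset (Fin n), (∑ v, X v * chi S v) * chi S x
      = ∑ v, X v * (chi S v * chi S x) := by
    intro S
    rw [Finset.sum_mul]
    exact Finset.sum_congr rfl fun v _ => by ring
  simp_rw [key]
  rw [Finset.sum_comm]
  have inner : ∀ v : Fin n → Fin 2,
      ∑ S : Finset (Fin n), X v * (chi S v * chi S x)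
        = if v = x then 2 ^ n * X v else 0 := by
    intro v
    rw [← Finset.mul_sum]
    have : ∑ S : Finset (Fin n), chi S v * chi S x = if v + x = 0 then 2 ^ n else 0 := by
      rw [Finset.sum_congr rfl fun S _ => chi_mul S v x]
      exact sum_chi (v + x)
    rw [this]
    by_cases h : v = x
    · rw [if_pos ((add_eq_zero_iff v x).mpr h), if_pos h]; ring
    · rw [if_neg (fun hc => h ((add_eq_zero_iff v x).mp hc)), if_neg h]; ring
  simp_rw [inner]
  simp

def flip (i : Fin n) (w : Fin n → Fin 2) : Fin n → Fin 2 := Function.update w i (w i + 1)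

lemma flip_apply_same (i : Fin n) (w : Fin n → Fin 2) : flip i w i = w i + 1 :=
  Function.update_self i _ w

lemma flip_apply_ne (i j : Fin n) (w : Fin n → Fin 2) (h : j ≠ i) : flip i w j = w j :=
  Function.update_of_ne h _ w

lemma flip_flip (i : Fin n) (w : Fin n → Fin 2) : flip i (flip i w) = w := by
  funext j
  by_cases h : j = i
  · subst h
    rw [flip_apply_same, flip_apply_same]
    have : ∀ a : Fin 2, a + 1 + 1 = a := by decide
    exact this _
  · rw [flip_apply_ne _ _ _ h, flip_apply_ne _ _ _ h]

lemma flip_ne (i : Fin n) (w : Fin n → Fin 2) : flip i w ≠ w := by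
  intro hc
  have := congrFun hc i
  rw [flip_apply_same] at this
  revert this
  have : ∀ a : Fin 2, a + 1 ≠ a := by decide
  exact this _

lemma hammingDist_flip (w : Fin n → Fin 2) (i : Fin n) : hammingDist w (flip i w) = 1 := by
  rw [hammingDist]
  rw [Finset.card_eq_one]
  refine ⟨i, ?_⟩
  ext j
  simp only [Finset.mem_filter, Finset.mem_univ, true_and, Finset.mem_singleton]
  constructor
  · intro h
    by_contra hc
    exact h (flip_apply_ne i j w hc).symm
  · rintro rfl
    rw [flip_apply_same]
    have : ∀ a : Fin 2, a ≠ a + 1 := by decide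
    exact this _

lemma flip_injective (w : Fin n → Fin 2) : Function.Injective (fun i => flip i w) := by
  intro i j h
  by_contra hc
  have h1 := congrFun h i
  simp only at h1
  rw [flip_apply_same, flip_apply_ne j i w hc] at h1
  have : ∀ a : Fin 2, a + 1 ≠ a := by decide
  exact this _ h1

lemma sphere_eq_image (w : Fin n → Fin 2) :
    Finset.univ.filter (fun v => hammingDist w v = 1)
      = Finset.image (fun i => flip i w) Finset.univ := by
  ext v
  simp only [Finset.mem_filter, Finset.mem_univ, true_and, Finset.mem_image]
  constructor
  · intro h
    rw [hammingDist, Finset.card_eq_one] at h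
    obtain ⟨i, hi⟩ := h
    refine ⟨i, ?_⟩
    have hmem : ∀ j : Fin n, w j ≠ v j ↔ j = i := by
      intro j
      constructor
      · intro hj
        have hjj : j ∈ Finset.univ.filter (fun j => w j ≠ v j) := by
          simp [hj]
        rw [hi] at hjj
        exact Finset.mem_singleton.mp hjj
      · rintro rfl
        have hii : j ∈ ({j} : Finset (Fin n)) := Finset.mem_singleton_self j
        rw [← hi] at hii
        exact (Finset.mem_filter.mp hii).2
    funext j
    by_cases hj : j = i
    · subst hj
      have hne : w j ≠ v j := (hmem j).mpr rfl
      rw [flip_apply_same]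
      revert hne
      have : ∀ a b : Fin 2, a ≠ b → a + 1 = b := by decide
      exact fun h => this _ _ h
    · rw [flip_apply_ne i j w hj]
      by_contra hc
      exact hj ((hmem j).mp hc)
  · rintro ⟨i, rfl⟩
    exact hammingDist_flip w i

lemma sum_sphere (w : Fin n → Fin 2) (φ : (Fin n → Fin 2) → ℤ) :
    ∑ v ∈ Finset.univ.filter (fun v => hammingDist w v = 1), φ v
      = ∑ i : Fin n, φ (flip i w) := by
  rw [sphere_eq_image]
  rw [Finset.sum_image (fun i _ j _ h => flip_injective w h)]

lemma chi_flip (S : Finset (Fin n)) (i : Fin n) (w : Fin n → Fin 2) :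
    chi S (flip i w) = (if i ∈ S then -1 else 1) * chi S w := by
  by_cases h : i ∈ S
  · rw [if_pos h]
    unfold chi
    rw [← Finset.mul_prod_erase S _ h, ← Finset.mul_prod_erase S (fun j => eps (w j)) h]
    rw [flip_apply_same, eps_add_one]
    have : ∏ j ∈ S.erase i, eps (flip i w j) = ∏ j ∈ S.erase i, eps (w j) :=
      Finset.prod_congr rfl fun j hj =>
        congrArg eps (flip_apply_ne i j w (Finset.ne_of_mem_erase hj))
    rw [this]
    ring
  · rw [if_neg h, one_mul]
    exact Finset.prod_congr rfl fun j hj =>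
      congrArg eps (flip_apply_ne i j w (fun hc => h (hc ▸ hj)))


lemma sum_chi_univ (S : Finset (Fin n)) :
    ∑ v : Fin n → Fin 2, chi S v = if S = ∅ then 2 ^ n else 0 := by
  by_cases hS : S = ∅
  · subst hS
    simp only [chi, Finset.prod_empty, if_pos rfl]
    rw [Finset.sum_const, Finset.card_univ]
    simp
  · rw [if_neg hS]
    obtain ⟨i, hi⟩ := Finset.nonempty_iff_ne_empty.mpr hS
    have hinv : Function.Involutive (flip i) := flip_flip i
    have h1 : ∑ v : Fin n → Fin 2, chi S v = ∑ v : Fin n → Fin 2, chi S (flip i v) :=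
      (Fintype.sum_equiv (hinv.toPerm) _ _ (fun v => rfl)).symm
    have h2 : ∀ v, chi S (flip i v) = - chi S v := by
      intro v
      rw [chi_flip, if_pos hi]
      ring
    simp_rw [h2] at h1
    rw [Finset.sum_neg_distrib] at h1
    linarith

def cpl (w : Fin n → Fin 2) : Fin n → Fin 2 := fun i => w i + 1

lemma cpl_involutive : Function.Involutive (cpl (n := n)) := by
  intro w
  funext i
  show w i + 1 + 1 = w i
  revert w
  have : ∀ a : Fin 2, a + 1 + 1 = a := by decide
  exact fun w => this (w i)

lemma chi_cpl (S : Finset (Fin n)) (w : Fin n → Fin 2) :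
    chi S (cpl w) = (-1) ^ S.card * chi S w := by
  unfold chi cpl
  have : ∀ j ∈ S, eps (w j + 1) = (-1) * eps (w j) := fun j _ => by
    rw [eps_add_one]; ring
  rw [Finset.prod_congr rfl this, Finset.prod_mul_distrib, Finset.prod_const]

lemma hammingDist_cpl (v u : Fin n → Fin 2) :
    hammingDist v (cpl u) = hammingDist (cpl v) u := by
  unfold hammingDist cpl
  congr 1
  apply Finset.filter_congr
  intro i _
  have : ∀ a b : Fin 2, (a ≠ b + 1) ↔ (a + 1 ≠ b) := by decide
  simpa using this (v i) (u i)


def Fh (C : Finset (Fin n → Fin 2)) (S : Finset (Fin n)) : ℤ := ∑ v ∈ C, chi S v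

lemma sum_pm (S : Finset (Fin n)) :
    ∑ i : Fin n, (if i ∈ S then (-1 : ℤ) else 1) = (n : ℤ) - 2 * S.card := by
  rw [Finset.sum_ite]
  simp only [Finset.sum_const, Finset.filter_mem_eq_inter, Finset.univ_inter]
  rw [Finset.filter_not, Finset.filter_mem_eq_inter, Finset.univ_inter,
    Finset.card_sdiff_of_subset (Finset.subset_univ S), Finset.card_univ]
  simp only [nsmul_eq_mul, Fintype.card_fin]
  rw [Nat.cast_sub (by simpa using Finset.card_le_univ S)]
  ring

lemma hat_Nb (C : Finset (Fin n → Fin 2)) (S : Finset (Fin n)) :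
    ∑ v : Fin n → Fin 2, ((C.filter (fun w => hammingDist v w = 1)).card : ℤ) * chi S v
      = ((n : ℤ) - 2 * S.card) * Fh C S := by
  have h1 : ∀ v : Fin n → Fin 2,
      ((C.filter (fun w => hammingDist v w = 1)).card : ℤ) * chi S v
        = ∑ w ∈ C, (if hammingDist v w = 1 then chi S v else 0) := by
    intro v
    rw [← Finset.sum_filter, Finset.sum_const, nsmul_eq_mul]
  simp_rw [h1]
  rw [Finset.sum_comm]
  have h2 : ∀ w ∈ C, (∑ v : Fin n → Fin 2, if hammingDist v w = 1 then chi S v else 0)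
      = ((n : ℤ) - 2 * S.card) * chi S w := by
    intro w _
    rw [← Finset.sum_filter]
    have hsw : Finset.univ.filter (fun v => hammingDist v w = 1)
        = Finset.univ.filter (fun v => hammingDist w v = 1) := by
      apply Finset.filter_congr
      intro v _
      rw [hammingDist_comm]
    rw [hsw, sum_sphere]
    simp_rw [chi_flip]
    rw [← Finset.sum_mul, sum_pm]
  rw [Finset.sum_congr rfl h2, ← Finset.mul_sum]
  rfl

lemma hat_F (C : Finset (Fin n → Fin 2)) (S : Finset (Fin n)) :
    ∑ v : Fin n → Fin 2, (if v ∈ C then (1 : ℤ) else 0) * chi S v = Fh C S := by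
  simp_rw [ite_mul, one_mul, zero_mul]
  rw [← Finset.sum_filter, Finset.filter_mem_eq_inter, Finset.univ_inter]
  rfl

lemma hat_cpl (C : Finset (Fin n → Fin 2)) (S : Finset (Fin n)) :
    ∑ v : Fin n → Fin 2, (if cpl v ∈ C then (1 : ℤ) else 0) * chi S v
      = (-1) ^ S.card * Fh C S := by
  have hsq : ((-1 : ℤ)) ^ S.card * ((-1) ^ S.card) = 1 := by
    rw [← pow_add]
    exact Even.neg_one_pow ⟨S.card, rfl⟩
  calc ∑ v : Fin n → Fin 2, (if cpl v ∈ C then (1 : ℤ) else 0) * chi S v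
      = ∑ v : Fin n → Fin 2, (if v ∈ C then (1 : ℤ) else 0) * ((-1) ^ S.card * chi S v) := by
        apply Fintype.sum_bijective cpl cpl_involutive.bijective
        intro x
        rw [chi_cpl, ← mul_assoc ((-1 : ℤ) ^ S.card), hsq, one_mul]
    _ = (-1) ^ S.card * ∑ v : Fin n → Fin 2, (if v ∈ C then (1 : ℤ) else 0) * chi S v := by
        rw [Finset.mul_sum]
        exact Finset.sum_congr rfl fun v _ => by ring
    _ = (-1) ^ S.card * Fh C S := by rw [hat_F]


lemma strength (C : Finset (Fin n → Fin 2)) (N t : ℕ) (htn : t ≤ n)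
    (hOA : ∀ s : Finset (Fin n), s.card = t → ∀ g : Fin n → Fin 2,
      (C.filter (fun x => ∀ i ∈ s, x i = g i)).card * 2 ^ t = N)
    (S : Finset (Fin n)) (hS : S ≠ ∅) (hSt : S.card ≤ t) : Fh C S = 0 := by
  obtain ⟨s, hSs, -, hscard⟩ :=
    Finset.exists_subsuperset_card_eq (Finset.subset_univ S) hSt (by simpa using htn)
  classical
  set proj : (Fin n → Fin 2) → (Fin n → Fin 2) :=
    fun v => fun i => if i ∈ s then v i else 0 with hproj
  have hfib : Fh C S = ∑ k : Fin n → Fin 2,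
      ∑ v ∈ C.filter (fun v => proj v = k), chi S v :=
    (Finset.sum_fiberwise C proj (chi S)).symm
  have hinner : ∀ k : Fin n → Fin 2,
      ∑ v ∈ C.filter (fun v => proj v = k), chi S v
        = ((C.filter (fun v => proj v = k)).card : ℤ) * chi S k := by
    intro k
    rw [Finset.sum_congr rfl (fun v hv => ?_), Finset.sum_const, nsmul_eq_mul]
    have hpv : proj v = k := (Finset.mem_filter.mp hv).2
    unfold chi
    apply Finset.prod_congr rfl
    intro i hi
    have : k i = v i := by
      rw [← hpv]
      simp only [hproj]
      rw [if_pos (hSs hi)]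
    rw [this]
  have hcard : ∀ k : Fin n → Fin 2,
      ((C.filter (fun v => proj v = k)).card : ℤ) * 2 ^ t
        = if proj k = k then (N : ℤ) else 0 := by
    intro k
    by_cases hk : proj k = k
    · rw [if_pos hk]
      have hfilt : C.filter (fun v => proj v = k) = C.filter (fun x => ∀ i ∈ s, x i = k i) := by
        apply Finset.filter_congr
        intro v _
        constructor
        · intro h i hi
          have := congrFun h i
          simp only [hproj] at this
          rwa [if_pos hi] at this
        · intro h
          funext i
          simp only [hproj]
          by_cases his : i ∈ s
          · rw [if_pos his]
            exact h i his
          · rw [if_neg his]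
            have := congrFun hk i
            simp only [hproj] at this
            rw [if_neg his] at this
            exact this
      rw [hfilt]
      exact_mod_cast hOA s hscard k
    · rw [if_neg hk]
      have : C.filter (fun v => proj v = k) = ∅ := by
        apply Finset.filter_eq_empty_iff.mpr
        intro v _ hc
        apply hk
        have hidem : proj (proj v) = proj v := by
          funext i
          simp only [hproj]
          by_cases his : i ∈ s
          · rw [if_pos his, if_pos his]
          · rw [if_neg his, if_neg his]
        rw [← hc, hidem]
      rw [this]
      simp
  have hzero : ∑ k ∈ Finset.univ.filter (fun k : Fin n → Fin 2 => proj k = k), chi S k = 0 := by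
    obtain ⟨i₀, hi₀⟩ := Finset.nonempty_iff_ne_empty.mpr hS
    apply Finset.sum_involution (fun k _ => flip i₀ k)
    · intro k _
      rw [chi_flip, if_pos hi₀]
      ring
    · intro k _ _
      exact flip_ne i₀ k
    · intro k hk
      simp only [Finset.mem_filter, Finset.mem_univ, true_and] at hk ⊢
      funext i
      simp only [hproj]
      by_cases his : i ∈ s
      · rw [if_pos his]
      · rw [if_neg his]
        have h1 : flip i₀ k i = k i := flip_apply_ne i₀ i k (fun hc => his (hc ▸ hSs hi₀))
        have h2 := congrFun hk i
        simp only [hproj] at h2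
        rw [if_neg his] at h2
        rw [h1]
        exact h2
    · intro k _
      exact flip_flip i₀ k
  have hmain : Fh C S * 2 ^ t = 0 := by
    rw [hfib, Finset.sum_mul]
    calc ∑ k : Fin n → Fin 2, (∑ v ∈ C.filter (fun v => proj v = k), chi S v) * 2 ^ t
        = ∑ k : Fin n → Fin 2, (if proj k = k then (N : ℤ) else 0) * chi S k := by
          apply Finset.sum_congr rfl
          intro k _
          rw [hinner k]
          rw [mul_right_comm, hcard k]
      _ = (N : ℤ) * ∑ k ∈ Finset.univ.filter (fun k : Fin n → Fin 2 => proj k = k), chi S k := by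
          simp_rw [ite_mul, zero_mul]
          rw [← Finset.sum_filter, Finset.mul_sum]
      _ = 0 := by rw [hzero, mul_zero]
  have h2t : (2 : ℤ) ^ t ≠ 0 := by positivity
  exact (mul_eq_zero.mp hmain).resolve_right h2t


lemma Fh_empty (C : Finset (Fin n → Fin 2)) : Fh C ∅ = C.card := by
  unfold Fh chi
  simp

lemma master (t N : ℕ) (ht : Even t) (htn : t ≤ n) (C : Finset (Fin n → Fin 2))
    (hcard : C.card = N)
    (hOA : ∀ s : Finset (Fin n), s.card = t → ∀ g : Fin n → Fin 2,
      (C.filter (fun x => ∀ i ∈ s, x i = g i)).card * 2 ^ t = N)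
    (heqZ : (N : ℤ) * (2 * t + 4) = 2 ^ n * (2 * t + 3 - n)) :
    (∀ v ∈ C, ((C.filter (fun w => hammingDist v w = 1)).card : ℤ) = 0 ∧ cpl v ∉ C) ∧
    (∀ v : Fin n → Fin 2,
      ((C.filter (fun w => hammingDist v w = 1)).card : ℤ)
        + (2 * t + 3 - n) * (if v ∈ C then (1 : ℤ) else 0)
        + (if cpl v ∈ C then (1 : ℤ) else 0) = 2 * t + 3 - n) := by
  classical
  set A1 : ℤ := 2 * (t : ℤ) + 3 - n with hA1
  set F : (Fin n → Fin 2) → ℤ := fun v => if v ∈ C then 1 else 0 with hF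
  set Fc : (Fin n → Fin 2) → ℤ := fun v => if cpl v ∈ C then 1 else 0 with hFc
  set Nbz : (Fin n → Fin 2) → ℤ :=
    fun v => ((C.filter (fun w => hammingDist v w = 1)).card : ℤ) with hNbz
  set U : (Fin n → Fin 2) → ℤ := fun v => Nbz v + A1 * F v + Fc v with hU
  set m : Finset (Fin n) → ℤ :=
    fun S => ((n : ℤ) - 2 * S.card) + A1 + (-1) ^ S.card with hm
  have hUhat : ∀ S : Finset (Fin n), ∑ v, U v * chi S v = m S * Fh C S := by
    intro S
    have : ∀ v, U v * chi S v
        = Nbz v * chi S v + A1 * (F v * chi S v) + Fc v * chi S v := by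
      intro v; simp only [hU]; ring
    simp_rw [this]
    rw [Finset.sum_add_distrib, Finset.sum_add_distrib, ← Finset.mul_sum]
    rw [hat_Nb, hat_F, hat_cpl]
    simp only [hm]
    ring
  have hPar := parseval U F
  have hFhat : ∀ S : Finset (Fin n), ∑ v, F v * chi S v = Fh C S := hat_F C
  simp_rw [hUhat, hFhat] at hPar
  -- combinatorial side
  have hUF : ∑ v, U v * F v = A1 * N + ∑ v ∈ C, (Nbz v + Fc v) := by
    have h1 : ∀ v, U v * F v = if v ∈ C then Nbz v + A1 + Fc v else 0 := by
      intro v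
      by_cases h : v ∈ C
      · rw [if_pos h]
        simp only [hU, hF, if_pos h]
        ring
      · rw [if_neg h]
        simp only [hU, hF, if_neg h]
        ring
    simp_rw [h1]
    rw [← Finset.sum_filter, Finset.filter_mem_eq_inter, Finset.univ_inter]
    simp only [Finset.sum_add_distrib]
    rw [Finset.sum_const, hcard, nsmul_eq_mul]
    ring
  rw [hUF] at hPar
  set T : ℤ := ∑ v ∈ C, (Nbz v + Fc v) with hT
  have hempty : m ∅ * Fh C ∅ * Fh C ∅ = 2 ^ n * (A1 * N) := by
    rw [Fh_empty, hcard]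
    have hm0 : m ∅ = 2 * (t : ℤ) + 4 := by
      simp only [hm, hA1, Finset.card_empty]
      push_cast
      ring
    rw [hm0]
    simp only [hA1]
    linear_combination (N : ℤ) * heqZ
  have hmain : ∑ S ∈ Finset.univ \ {∅}, m S * Fh C S * Fh C S = 2 ^ n * T := by
    have hsplit := Finset.sum_eq_sum_sdiff_singleton_add
      (Finset.mem_univ (∅ : Finset (Fin n))) (fun S => m S * Fh C S * Fh C S)
    rw [hsplit, hempty] at hPar
    rw [mul_add] at hPar
    linarith
  have hTnonneg : (0 : ℤ) ≤ T := by
    apply Finset.sum_nonneg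
    intro v _
    have h1 : (0 : ℤ) ≤ Nbz v := by simp only [hNbz]; positivity
    have h2 : (0 : ℤ) ≤ Fc v := by
      simp only [hFc]
      split <;> norm_num
    linarith
  have hterm : ∀ S ∈ Finset.univ \ {(∅ : Finset (Fin n))}, m S * Fh C S * Fh C S ≤ 0 := by
    intro S hSmem
    have hSne : S ≠ ∅ := by
      rw [Finset.mem_sdiff, Finset.mem_singleton] at hSmem
      exact hSmem.2
    by_cases hle : S.card ≤ t
    · rw [strength C N t htn hOA S hSne hle]
      simp
    · have hj : t + 1 ≤ S.card := by omega
      have hmnp : m S ≤ 0 := by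
        simp only [hm, hA1]
        rcases Nat.even_or_odd S.card with he | ho
        · rw [he.neg_one_pow]
          obtain ⟨k, hk⟩ := he
          obtain ⟨l, hl⟩ := ht
          push_cast
          omega
        · rw [ho.neg_one_pow]
          push_cast
          omega
      nlinarith [mul_self_nonneg (Fh C S), hmnp]
  have hsum_nonpos : ∑ S ∈ Finset.univ \ {(∅ : Finset (Fin n))}, m S * Fh C S * Fh C S ≤ 0 :=
    Finset.sum_nonpos hterm
  have hT0 : T = 0 := by
    have h1 : (0 : ℤ) < 2 ^ n := by positivity
    nlinarith
  have hLHS0 : ∑ S ∈ Finset.univ \ {(∅ : Finset (Fin n))}, m S * Fh C S * Fh C S = 0 := by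
    rw [hmain, hT0, mul_zero]
  have hSzero := (Finset.sum_eq_zero_iff_of_nonpos hterm).mp hLHS0
  have hmFh : ∀ S : Finset (Fin n), S ≠ ∅ → m S * Fh C S = 0 := by
    intro S hSne
    have hmem : S ∈ Finset.univ \ {(∅ : Finset (Fin n))} := by
      rw [Finset.mem_sdiff, Finset.mem_singleton]
      exact ⟨Finset.mem_univ S, hSne⟩
    have := hSzero S hmem
    rcases mul_eq_zero.mp this with h | h
    · exact h
    · rw [h, mul_zero]
  -- part 1
  have hsum0 : ∑ v ∈ C, (Nbz v + Fc v) = 0 := by rw [← hT]; exact hT0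
  have hterms : ∀ v ∈ C, Nbz v + Fc v = 0 := by
    apply (Finset.sum_eq_zero_iff_of_nonneg (fun v _ => ?_)).mp hsum0
    have h1 : (0 : ℤ) ≤ Nbz v := Nat.cast_nonneg _
    have h2 : (0 : ℤ) ≤ Fc v := by simp only [hFc]; split <;> norm_num
    linarith
  have hpart1 : ∀ v ∈ C,
      ((C.filter (fun w => hammingDist v w = 1)).card : ℤ) = 0 ∧ cpl v ∉ C := by
    intro v hv
    have h := hterms v hv
    have h1 : (0 : ℤ) ≤ Nbz v := Nat.cast_nonneg _
    have h2 : (0 : ℤ) ≤ Fc v := by simp only [hFc]; split <;> norm_num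
    constructor
    · have : Nbz v = 0 := by linarith
      simpa only [hNbz] using this
    · intro hc
      have : Fc v = 1 := by simp only [hFc]; rw [if_pos hc]
      linarith
  refine ⟨hpart1, ?_⟩
  -- part 2 : the identity U ≡ A1 via Fourier inversion
  intro x
  have hinv := inversion (fun v => U v - A1) x
  have hhat : ∀ S : Finset (Fin n),
      ∑ v, (U v - A1) * chi S v = m S * Fh C S - A1 * (if S = ∅ then 2 ^ n else 0) := by
    intro S
    have hsplit : ∀ v : Fin n → Fin 2, (U v - A1) * chi S v
        = U v * chi S v - A1 * chi S v := fun v => by ring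
    simp_rw [hsplit]
    rw [Finset.sum_sub_distrib, hUhat, ← Finset.mul_sum, sum_chi_univ]
  have hzero : ∀ S : Finset (Fin n),
      m S * Fh C S - A1 * (if S = ∅ then 2 ^ n else 0) = 0 := by
    intro S
    by_cases hS : S = ∅
    · subst hS
      rw [if_pos rfl, Fh_empty, hcard]
      have hm0 : m ∅ = 2 * (t : ℤ) + 4 := by
        simp only [hm, hA1, Finset.card_empty]
        push_cast
        ring
      rw [hm0]
      linarith [heqZ]
    · rw [if_neg hS, hmFh S hS]
      ring
  simp_rw [hhat, hzero] at hinv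
  simp only [Finset.sum_const, Finset.card_univ, zero_mul, smul_zero,
    Finset.sum_const_zero] at hinv
  have hUx : U x = A1 := by
    have h0 : (2 : ℤ) ^ n * (U x - A1) = 0 := hinv.symm
    rcases mul_eq_zero.mp h0 with h | h
    · exact absurd h (by positivity)
    · linarith
  simpa only [hU, hNbz, hF, hFc, hA1] using hUx


lemma sphere_card (v : Fin n → Fin 2) :
    (Finset.univ.filter (fun w => hammingDist v w = 1)).card = n := by
  rw [sphere_eq_image v, Finset.card_image_of_injective _ (flip_injective v),
    Finset.card_univ, Fintype.card_fin]

end OA6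

/-- An OA(N,n,2,t) of even strength t attaining the Levenshtein bound
N = 2^n(1-(n+1)/(2(t+2))) induces, with C' = C+1̄ and C'' the rest, an equitable
3-partition with quotient matrix [[0,a,n-a],[a,0,n-a],[a+1,a+1,n-2a-2]], a = 2t-n+2. -/
theorem stmt_6 (n t N : ℕ) (ht : Even t) (htn : t ≤ n)
    (C : Finset (Fin n → Fin 2)) (hcard : C.card = N)
    (hOA : ∀ s : Finset (Fin n), s.card = t → ∀ g : Fin n → Fin 2,
      (C.filter (fun x => ∀ i ∈ s, x i = g i)).card * 2 ^ t = N)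
    (heq : (N : ℝ) = 2 ^ n * (1 - (n + 1) / (2 * (t + 2)))) :
    let C' : Finset (Fin n → Fin 2) := C.image (fun x => fun i => x i + 1);
    let C'' : Finset (Fin n → Fin 2) := (C ∪ C')ᶜ;
    let a : ℤ := 2 * (t : ℤ) - n + 2;
    Disjoint C C' ∧
    (∀ v ∈ C,
      ((C.filter (fun w => hammingDist v w = 1)).card : ℤ) = 0 ∧
      ((C'.filter (fun w => hammingDist v w = 1)).card : ℤ) = a ∧
      ((C''.filter (fun w => hammingDist v w = 1)).card : ℤ) = n - a) ∧
    (∀ v ∈ C',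
      ((C.filter (fun w => hammingDist v w = 1)).card : ℤ) = a ∧
      ((C'.filter (fun w => hammingDist v w = 1)).card : ℤ) = 0 ∧
      ((C''.filter (fun w => hammingDist v w = 1)).card : ℤ) = n - a) ∧
    (∀ v ∈ C'',
      ((C.filter (fun w => hammingDist v w = 1)).card : ℤ) = a + 1 ∧
      ((C'.filter (fun w => hammingDist v w = 1)).card : ℤ) = a + 1 ∧
      ((C''.filter (fun w => hammingDist v w = 1)).card : ℤ) = n - 2 * a - 2) := by
  intro C' C'' a
  classical
  have h2t2 : (2 : ℝ) * ((t : ℝ) + 2) ≠ 0 := by positivity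
  have heqR : (N : ℝ) * (2 * (t : ℝ) + 4) = 2 ^ n * (2 * (t : ℝ) + 3 - n) := by
    rw [heq]
    field_simp
    ring
  have heqZ : (N : ℤ) * (2 * t + 4) = 2 ^ n * (2 * t + 3 - n) := by
    exact_mod_cast heqR
  obtain ⟨M1, M2⟩ := OA6.master t N ht htn C hcard hOA heqZ
  have hC' : C' = C.image OA6.cpl := rfl
  have hmemC' : ∀ v : Fin n → Fin 2, v ∈ C' ↔ OA6.cpl v ∈ C := by
    intro v
    rw [hC', Finset.mem_image]
    constructor
    · rintro ⟨u, hu, rfl⟩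
      rwa [OA6.cpl_involutive u]
    · intro h
      exact ⟨OA6.cpl v, h, OA6.cpl_involutive v⟩
  have hdisj : Disjoint C C' := by
    rw [Finset.disjoint_left]
    intro v hv hv'
    exact (M1 v hv).2 ((hmemC' v).mp hv')
  -- neighbours in C' equal neighbours of the complement in C
  have hNb' : ∀ v : Fin n → Fin 2,
      (C'.filter (fun w => hammingDist v w = 1)).card
        = (C.filter (fun w => hammingDist (OA6.cpl v) w = 1)).card := by
    intro v
    rw [hC', Finset.filter_image]
    rw [Finset.card_image_of_injective _ OA6.cpl_involutive.injective]
    congr 1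
    apply Finset.filter_congr
    intro u _
    rw [OA6.hammingDist_cpl v u]
  -- partition of the sphere
  have hpart : ∀ v : Fin n → Fin 2,
      (C.filter (fun w => hammingDist v w = 1)).card
        + (C'.filter (fun w => hammingDist v w = 1)).card
        + (C''.filter (fun w => hammingDist v w = 1)).card = n := by
    intro v
    have hunion : (C ∪ C') ∪ C'' = Finset.univ := Finset.union_compl (C ∪ C')
    have hd2 : Disjoint (C ∪ C') C'' := disjoint_compl_right
    calc (C.filter (fun w => hammingDist v w = 1)).card
          + (C'.filter (fun w => hammingDist v w = 1)).card
          + (C''.filter (fun w => hammingDist v w = 1)).card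
        = (((C ∪ C') ∪ C'').filter (fun w => hammingDist v w = 1)).card := by
          rw [Finset.filter_union,
            Finset.card_union_of_disjoint (Finset.disjoint_filter_filter hd2),
            Finset.filter_union,
            Finset.card_union_of_disjoint (Finset.disjoint_filter_filter hdisj)]
      _ = n := by rw [hunion, OA6.sphere_card v]
  -- the fundamental identity specialised
  have key : ∀ v : Fin n → Fin 2,
      ((C.filter (fun w => hammingDist v w = 1)).card : ℤ)
        = (a + 1) * (1 - (if v ∈ C then (1 : ℤ) else 0))
          - (if OA6.cpl v ∈ C then (1 : ℤ) else 0) := by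
    intro v
    have := M2 v
    have ha : (2 * (t : ℤ) + 3 - n) = a + 1 := by simp only [a]; ring
    rw [ha] at this
    linarith
  have hcplcpl : ∀ v : Fin n → Fin 2, OA6.cpl (OA6.cpl v) = v := OA6.cpl_involutive
  refine ⟨hdisj, ?_, ?_, ?_⟩
  · -- v ∈ C
    intro v hv
    have hv' : v ∉ C' := Finset.disjoint_left.mp hdisj hv
    have hcplv : OA6.cpl v ∉ C := (M1 v hv).2
    have e1 : ((C.filter (fun w => hammingDist v w = 1)).card : ℤ) = 0 := (M1 v hv).1
    have e2 : ((C'.filter (fun w => hammingDist v w = 1)).card : ℤ) = a := by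
      rw [hNb' v, key (OA6.cpl v), hcplcpl v]
      rw [if_neg hcplv, if_pos hv]
      ring
    refine ⟨e1, e2, ?_⟩
    have := hpart v
    have hcast : ((C.filter (fun w => hammingDist v w = 1)).card : ℤ)
        + ((C'.filter (fun w => hammingDist v w = 1)).card : ℤ)
        + ((C''.filter (fun w => hammingDist v w = 1)).card : ℤ) = n := by
      exact_mod_cast this
    linarith
  · -- v ∈ C'
    intro v hv
    have hcplv : OA6.cpl v ∈ C := (hmemC' v).mp hv
    have hvC : v ∉ C := fun hc => Finset.disjoint_left.mp hdisj hc hv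
    have e1 : ((C.filter (fun w => hammingDist v w = 1)).card : ℤ) = a := by
      rw [key v, if_neg hvC, if_pos hcplv]
      ring
    have e2 : ((C'.filter (fun w => hammingDist v w = 1)).card : ℤ) = 0 := by
      rw [hNb' v]
      exact (M1 (OA6.cpl v) hcplv).1
    refine ⟨e1, e2, ?_⟩
    have hcast : ((C.filter (fun w => hammingDist v w = 1)).card : ℤ)
        + ((C'.filter (fun w => hammingDist v w = 1)).card : ℤ)
        + ((C''.filter (fun w => hammingDist v w = 1)).card : ℤ) = n := by
      exact_mod_cast hpart v
    linarith
  · -- v ∈ C''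
    intro v hv
    have hv2 : v ∉ C ∪ C' := Finset.mem_compl.mp hv
    have hvC : v ∉ C := fun hc => hv2 (Finset.mem_union_left _ hc)
    have hvC' : v ∉ C' := fun hc => hv2 (Finset.mem_union_right _ hc)
    have hcplv : OA6.cpl v ∉ C := fun hc => hvC' ((hmemC' v).mpr hc)
    have e1 : ((C.filter (fun w => hammingDist v w = 1)).card : ℤ) = a + 1 := by
      rw [key v, if_neg hvC, if_neg hcplv]
      ring
    have e2 : ((C'.filter (fun w => hammingDist v w = 1)).card : ℤ) = a + 1 := by
      rw [hNb' v, key (OA6.cpl v), hcplcpl v]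
      rw [if_neg hvC, if_neg hcplv]
      ring
    refine ⟨e1, e2, ?_⟩
    have hcast : ((C.filter (fun w => hammingDist v w = 1)).card : ℤ)
        + ((C'.filter (fun w => hammingDist v w = 1)).card : ℤ)
        + ((C''.filter (fun w => hammingDist v w = 1)).card : ℤ) = n := by
      exact_mod_cast hpart v
    linarith
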